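/- Let K = ℚ(i), O = ℤ[i], and Γ = SL₂(ℤ[i]). Set S = [[0,−1],[1,0]], T = [[1,1],[0,1]], T_ω = [[1,i],[0,1]], L = [[i,0],[0,−i]], U = TS, and E = T_ω·S·L. Then for every integer k ≥ 0, the subspace V^S + V^{SL} + V^U + V^E of V_{k,k}(ℂ) (the sum of the fixed subspaces of S, SL, U and E under the right action of Γ) is contained in the kernel of the Manin map Φ; that is, Φ(v) = 0 for every v in this sum. -/

import Mathlib

open MvPolynomial
open scoped TensorProduct

set_option synthInstance.maxHeartbeats 1000000
set_option maxHeartbeats 1000000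

noncomputable section

variable (K : Subfield ℂ)

/-- The projective line `P¹(K)` over the field `K`. -/
abbrev ProjLine := Projectivization K (Fin 2 → K)

/-- The injective linear map on `Fin 2 → K` attached to `g ∈ SL₂(K)`. -/
lemma toLin'_inj (g : Matrix.SpecialLinearGroup (Fin 2) K) :
    Function.Injective (Matrix.toLin' (g : Matrix (Fin 2) (Fin 2) K)) := by
  intro x y hxy
  have h2 := congrArg (Matrix.toLin' ((g⁻¹ : Matrix.SpecialLinearGroup (Fin 2) K) :
      Matrix (Fin 2) (Fin 2) K)) hxy
  rwa [← Matrix.toLin'_mul_apply, ← Matrix.toLin'_mul_apply, ← Matrix.SpecialLinearGroup.coe_mul,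
      inv_mul_cancel, Matrix.SpecialLinearGroup.coe_one, Matrix.toLin'_one,
      LinearMap.id_apply, LinearMap.id_apply] at h2

/-- The (left) action of `SL₂(K)` on `P¹(K)` by fractional linear transformations,
i.e. via the projectivization of the linear action on `K²`. -/
def projAct (g : Matrix.SpecialLinearGroup (Fin 2) K) : ProjLine K → ProjLine K :=
  Projectivization.map (Matrix.toLin' (g : Matrix (Fin 2) (Fin 2) K)) (toLin'_inj K g)

/-- The generating relations for the space of weight-2 modular symbols: all elements
`{α,β} + {β,α}` and `{α,β} + {β,γ} + {γ,α}` of the free `ℂ`-vector space on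
`P¹(K) × P¹(K)`. -/
def relSet : Set ((ProjLine K × ProjLine K) →₀ ℂ) :=
  {x | ∃ α β : ProjLine K,
        x = Finsupp.single (α, β) 1 + Finsupp.single (β, α) 1} ∪
  {x | ∃ α β γ : ProjLine K,
        x = Finsupp.single (α, β) 1 + Finsupp.single (β, γ) 1 + Finsupp.single (γ, α) 1}

/-- The subspace spanned by the modular-symbol relations. -/
def relSub : Submodule ℂ ((ProjLine K × ProjLine K) →₀ ℂ) :=
  Submodule.span ℂ (relSet K)

/-- The space `M₂` of weight-2 modular symbols over `K`. -/
def ModSymb := ((ProjLine K × ProjLine K) →₀ ℂ) ⧸ relSub K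

instance : AddCommGroup (ModSymb K) := by unfold ModSymb; infer_instance
instance : Module ℂ (ModSymb K) := by unfold ModSymb; infer_instance

/-- The right action of `g ∈ SL₂(K)` on the free vector space on pairs of points of
`P¹(K)`, with `{α,β}·g = {g⁻¹α, g⁻¹β}`. -/
def symbAct₀ (g : Matrix.SpecialLinearGroup (Fin 2) K) :
    ((ProjLine K × ProjLine K) →₀ ℂ) →ₗ[ℂ] ((ProjLine K × ProjLine K) →₀ ℂ) :=
  Finsupp.lmapDomain ℂ ℂ (fun p => (projAct K g⁻¹ p.1, projAct K g⁻¹ p.2))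

lemma symbAct₀_rel_le (g : Matrix.SpecialLinearGroup (Fin 2) K) :
    relSub K ≤ Submodule.comap (symbAct₀ K g) (relSub K) := by
  rw [relSub, Submodule.span_le]
  rintro x (⟨α, β, rfl⟩ | ⟨α, β, γ, rfl⟩) <;>
    refine Submodule.mem_comap.mpr (Submodule.subset_span ?_)
  · exact Or.inl ⟨projAct K g⁻¹ α, projAct K g⁻¹ β, by
      simp [symbAct₀, Finsupp.mapDomain_add, Finsupp.mapDomain_single]⟩
  · exact Or.inr ⟨projAct K g⁻¹ α, projAct K g⁻¹ β, projAct K g⁻¹ γ, by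
      simp [symbAct₀, Finsupp.mapDomain_add, Finsupp.mapDomain_single]⟩

/-- The right action of `g ∈ SL₂(K)` on the space of modular symbols. -/
def symbAct (g : Matrix.SpecialLinearGroup (Fin 2) K) : ModSymb K →ₗ[ℂ] ModSymb K :=
  Submodule.mapQ (relSub K) (relSub K) (symbAct₀ K g) (symbAct₀_rel_le K g)

/-- Right action of a `2×2` complex matrix `g = [[a,b],[c,d]]` on polynomials in
`X = X 0`, `Y = X 1`, `X̄ = X 2`, `Ȳ = X 3`, by the substitution
`X ↦ aX+bY`, `Y ↦ cX+dY`, `X̄ ↦ conj a X̄ + conj b Ȳ`, `Ȳ ↦ conj c X̄ + conj d Ȳ`. -/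
def polySubst (g : Matrix (Fin 2) (Fin 2) ℂ) : Fin 4 → MvPolynomial (Fin 4) ℂ :=
  ![C (g 0 0) * X 0 + C (g 0 1) * X 1,
    C (g 1 0) * X 0 + C (g 1 1) * X 1,
    C ((starRingEnd ℂ) (g 0 0)) * X 2 + C ((starRingEnd ℂ) (g 0 1)) * X 3,
    C ((starRingEnd ℂ) (g 1 0)) * X 2 + C ((starRingEnd ℂ) (g 1 1)) * X 3]

def matAct (g : Matrix (Fin 2) (Fin 2) ℂ) : Module.End ℂ (MvPolynomial (Fin 4) ℂ) :=
  (aeval (polySubst g)).toLinearMap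

/-- The subspace `V_{k,k}(ℂ)`: polynomials homogeneous of degree `k` in the pair `(X,Y)`
and homogeneous of degree `k` in the pair `(X̄,Ȳ)`. -/
def Vkk (k : ℕ) : Submodule ℂ (MvPolynomial (Fin 4) ℂ) :=
  weightedHomogeneousSubmodule ℂ ![1, 1, 0, 0] k ⊓ weightedHomogeneousSubmodule ℂ ![0, 0, 1, 1] k

lemma iwh_pow {w : Fin 4 → ℕ} {φ : MvPolynomial (Fin 4) ℂ} {m : ℕ}
    (h : φ.IsWeightedHomogeneous w m) (n : ℕ) :
    (φ ^ n).IsWeightedHomogeneous w (n * m) := by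
  induction n with
  | zero => simpa using isWeightedHomogeneous_one ℂ w
  | succ n ih =>
      rw [pow_succ, Nat.succ_mul]
      exact ih.mul h

lemma iwh_aeval (w : Fin 4 → ℕ) (f : Fin 4 → MvPolynomial (Fin 4) ℂ)
    (hf : ∀ i, (f i).IsWeightedHomogeneous w (w i))
    {k : ℕ} {P : MvPolynomial (Fin 4) ℂ} (hP : P.IsWeightedHomogeneous w k) :
    (aeval f P).IsWeightedHomogeneous w k := by
  classical
  rw [P.as_sum, map_sum]
  apply IsWeightedHomogeneous.sum
  intro m hm
  rw [aeval_monomial]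
  have h1 : ((algebraMap ℂ (MvPolynomial (Fin 4) ℂ)) (coeff m P)).IsWeightedHomogeneous w 0 :=
    isWeightedHomogeneous_C w _
  have h2 : (∏ i ∈ m.support, f i ^ m i).IsWeightedHomogeneous w
      (∑ i ∈ m.support, m i * w i) :=
    IsWeightedHomogeneous.prod m.support _ _ (fun i _ => iwh_pow (hf i) (m i))
  have h3 := h1.mul h2
  rw [zero_add] at h3
  have hk : (∑ i ∈ m.support, m i * w i) = k := by
    have := hP (MvPolynomial.mem_support_iff.mp hm)
    rw [← this, Finsupp.weight_apply, Finsupp.sum]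
    simp [smul_eq_mul]
  rwa [hk] at h3

lemma iwh_lin (w : Fin 4 → ℕ) (a b : ℂ) (i j : Fin 4) (n : ℕ) (hi : w i = n) (hj : w j = n) :
    IsWeightedHomogeneous w (C a * X i + C b * X j) n := by
  have h1 := (isWeightedHomogeneous_C (R := ℂ) w a).mul (isWeightedHomogeneous_X ℂ w i)
  have h2 := (isWeightedHomogeneous_C (R := ℂ) w b).mul (isWeightedHomogeneous_X ℂ w j)
  rw [zero_add, hi] at h1
  rw [zero_add, hj] at h2
  exact h1.add h2

lemma polySubst_iwh (g : Matrix (Fin 2) (Fin 2) ℂ) (w : Fin 4 → ℕ)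
    (hw : w = ![1, 1, 0, 0] ∨ w = ![0, 0, 1, 1]) (i : Fin 4) :
    (polySubst g i).IsWeightedHomogeneous w (w i) := by
  rcases hw with rfl | rfl <;> fin_cases i <;>
    · simp only [polySubst, Matrix.cons_val_zero, Matrix.cons_val_one, Matrix.head_cons,
        Matrix.cons_val_two, Matrix.tail_cons, Matrix.cons_val_three]
      apply iwh_lin <;> decide

/-- The action of a complex matrix preserves `V_{k,k}(ℂ)`. -/
lemma matAct_mem_Vkk (g : Matrix (Fin 2) (Fin 2) ℂ) {k : ℕ} {P : MvPolynomial (Fin 4) ℂ}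
    (hP : P ∈ Vkk k) : matAct g P ∈ Vkk k :=
  ⟨iwh_aeval _ _ (polySubst_iwh g _ (Or.inl rfl)) hP.1,
   iwh_aeval _ _ (polySubst_iwh g _ (Or.inr rfl)) hP.2⟩

/-- The complex matrix attached to an element of `SL₂(K)` via the inclusion `K ⊆ ℂ`. -/
def cmat (g : Matrix.SpecialLinearGroup (Fin 2) K) : Matrix (Fin 2) (Fin 2) ℂ :=
  fun i j => ((g : Matrix (Fin 2) (Fin 2) K) i j : ℂ)

variable (k : ℕ)

/-- The right action of `g ∈ SL₂(K)` on `V_{k,k}(ℂ)`. -/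
def vAct (g : Matrix.SpecialLinearGroup (Fin 2) K) : Vkk k →ₗ[ℂ] Vkk k :=
  (matAct (cmat K g)).restrict (fun _ hx => matAct_mem_Vkk _ hx)

/-- The underlying space `M₂ ⊗ V_{k,k}(ℂ)`. -/
def MV := ModSymb K ⊗[ℂ] Vkk k

instance : AddCommGroup (MV K k) := by unfold MV; infer_instance
instance : Module ℂ (MV K k) := by unfold MV; infer_instance

/-- The diagonal right action of `g ∈ SL₂(K)` on `M₂ ⊗ V_{k,k}(ℂ)`. -/
def diagAct (g : Matrix.SpecialLinearGroup (Fin 2) K) : MV K k →ₗ[ℂ] MV K k :=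
  TensorProduct.map (symbAct K g) (vAct K k g)

/-- The subspace of `M₂ ⊗ V_{k,k}(ℂ)` spanned by the elements `u − u·γ`, for `γ` in the
subgroup of `SL₂(K)` cut out by the predicate `pred` (e.g. `γ ∈ SL₂(O)`). -/
def coinvSub (pred : Matrix.SpecialLinearGroup (Fin 2) K → Prop) :
    Submodule ℂ (MV K k) :=
  Submodule.span ℂ {x | ∃ g, pred g ∧ ∃ u, x = u - diagAct K k g u}

/-- The space of coinvariants `(M₂ ⊗ V_{k,k}(ℂ))_Γ`. -/
def Coinv (pred : Matrix.SpecialLinearGroup (Fin 2) K → Prop) :=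
  MV K k ⧸ coinvSub K k pred

instance (pred : Matrix.SpecialLinearGroup (Fin 2) K → Prop) :
    AddCommGroup (Coinv K k pred) := by unfold Coinv; infer_instance
instance (pred : Matrix.SpecialLinearGroup (Fin 2) K → Prop) :
    Module ℂ (Coinv K k pred) := by unfold Coinv; infer_instance

/-- The point `0 = [0 : 1]` of `P¹(K)`. -/
def pt0 : ProjLine K :=
  Projectivization.mk K ![0, 1] (by intro h; simpa using congrFun h 1)

/-- The point `∞ = [1 : 0]` of `P¹(K)`. -/
def ptInf : ProjLine K :=
  Projectivization.mk K ![1, 0] (by intro h; simpa using congrFun h 0)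

/-- The modular symbol `{0, ∞} ∈ M₂`. -/
def symb0inf : ModSymb K :=
  Submodule.Quotient.mk (Finsupp.single (pt0 K, ptInf K) (1 : ℂ))

/-- The Manin map `Φ : V_{k,k}(ℂ) → (M₂ ⊗ V_{k,k}(ℂ))_Γ`, `v ↦ [{0,∞} ⊗ v]`. -/
def ManinPhi (pred : Matrix.SpecialLinearGroup (Fin 2) K → Prop) (v : Vkk k) :
    Coinv K k pred :=
  Submodule.Quotient.mk ((symb0inf K ⊗ₜ[ℂ] v : ModSymb K ⊗[ℂ] Vkk k) : MV K k)


namespace Stmt18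

/-- `K = ℚ(i)` as a subfield of `ℂ`. -/
def K1 : Subfield ℂ := Subfield.closure {Complex.I}

/-- `i` as an element of `K`. -/
def iK : K1 := ⟨Complex.I, Subfield.subset_closure (Set.mem_singleton _)⟩

def S : Matrix.SpecialLinearGroup (Fin 2) K1 :=
  ⟨!![0, -1; 1, 0], by simp [Matrix.det_fin_two_of]⟩

def T : Matrix.SpecialLinearGroup (Fin 2) K1 :=
  ⟨!![1, 1; 0, 1], by simp [Matrix.det_fin_two_of]⟩

def Tω : Matrix.SpecialLinearGroup (Fin 2) K1 :=
  ⟨!![1, iK; 0, 1], by simp [Matrix.det_fin_two_of]⟩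

def L : Matrix.SpecialLinearGroup (Fin 2) K1 :=
  ⟨!![iK, 0; 0, -iK], by
    rw [Matrix.det_fin_two_of]
    refine Subtype.ext ?_
    push_cast [iK]
    simp [Complex.I_mul_I]⟩

def U : Matrix.SpecialLinearGroup (Fin 2) K1 := T * S

def E : Matrix.SpecialLinearGroup (Fin 2) K1 := Tω * S * L

/-- The fixed subspace `V^g` of `g ∈ SL₂(K)` acting on `V_{k,k}(ℂ)`. -/
def fixV (k : ℕ) (g : Matrix.SpecialLinearGroup (Fin 2) K1) : Submodule ℂ (Vkk k) :=
  LinearMap.ker ((1 : Module.End ℂ (Vkk k)) - vAct K1 k g)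

/-- The predicate "`γ ∈ SL₂(ℤ[i])`": all entries lie in `ℤ[i] ⊆ ℂ`. -/
def gammaInt (γ : Matrix.SpecialLinearGroup (Fin 2) K1) : Prop :=
  ∀ i j, ((γ : Matrix (Fin 2) (Fin 2) K1) i j : ℂ) ∈ Subring.closure {Complex.I}


lemma iK_coe : ((iK : K1) : ℂ) = Complex.I := rfl

lemma iK_mul_iK : iK * iK = -1 := by
  refine Subtype.ext ?_
  push_cast [iK]
  simp [Complex.I_mul_I]

lemma projAct_mk_eq (g : Matrix.SpecialLinearGroup (Fin 2) K1)
    (v w : Fin 2 → K1) (hv : v ≠ 0) (hw : w ≠ 0) (c : K1)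
    (h : (g : Matrix (Fin 2) (Fin 2) K1).mulVec v = c • w) :
    projAct K1 g (Projectivization.mk K1 v hv) = Projectivization.mk K1 w hw := by
  rw [projAct, Projectivization.map_mk, Projectivization.mk_eq_mk_iff']
  exact ⟨c, by rw [← h, Matrix.toLin'_apply]⟩

lemma symbAct_mk_single (g : Matrix.SpecialLinearGroup (Fin 2) K1) (α β : ProjLine K1) :
    symbAct K1 g (Submodule.Quotient.mk (Finsupp.single (α, β) (1:ℂ))) =
      Submodule.Quotient.mk (Finsupp.single (projAct K1 g⁻¹ α, projAct K1 g⁻¹ β) (1:ℂ)) := by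
  rw [symbAct]; erw [Submodule.mapQ_apply]
  congr 1
  simp [symbAct₀, Finsupp.mapDomain_single]

lemma msymb_rev (α β : ProjLine K1) :
    (Submodule.Quotient.mk (Finsupp.single (α, β) (1:ℂ)) : ModSymb K1)
      = - Submodule.Quotient.mk (Finsupp.single (β, α) (1:ℂ)) := by
  rw [eq_neg_iff_add_eq_zero, ← Submodule.Quotient.mk_add, Submodule.Quotient.mk_eq_zero]
  exact Submodule.subset_span (Or.inl ⟨α, β, rfl⟩)

lemma msymb_rel3 (α β γ : ProjLine K1) :
    (Submodule.Quotient.mk (Finsupp.single (α, β) (1:ℂ)) : ModSymb K1)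
      + Submodule.Quotient.mk (Finsupp.single (β, γ) (1:ℂ))
      + Submodule.Quotient.mk (Finsupp.single (γ, α) (1:ℂ)) = 0 := by
  rw [← Submodule.Quotient.mk_add, ← Submodule.Quotient.mk_add, Submodule.Quotient.mk_eq_zero]
  exact Submodule.subset_span (Or.inr ⟨α, β, γ, rfl⟩)

lemma coinv_mk_eq (k : ℕ) (g : Matrix.SpecialLinearGroup (Fin 2) K1) (hg : gammaInt g)
    (u : MV K1 k) :
    (Submodule.Quotient.mk u : Coinv K1 k gammaInt)
      = Submodule.Quotient.mk (diagAct K1 k g u) := by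
  rw [Submodule.Quotient.eq]
  exact Submodule.subset_span ⟨g, hg, u, rfl⟩

lemma mem_fixV {k : ℕ} {g : Matrix.SpecialLinearGroup (Fin 2) K1} {v : Vkk k}
    (h : v ∈ fixV k g) : vAct K1 k g v = v := by
  have := LinearMap.mem_ker.mp h
  rw [LinearMap.sub_apply, Module.End.one_apply, sub_eq_zero] at this
  exact this.symm

/-- If `g⁻¹` swaps `0` and `∞`, then `Φ` vanishes on `V^g`. -/
lemma phi_zero_of_swap (k : ℕ) (g : Matrix.SpecialLinearGroup (Fin 2) K1) (hg : gammaInt g)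
    (h0 : projAct K1 g⁻¹ (pt0 K1) = ptInf K1) (hinf : projAct K1 g⁻¹ (ptInf K1) = pt0 K1)
    (v : Vkk k) (hv : vAct K1 k g v = v) : ManinPhi K1 k gammaInt v = 0 := by
  have hs : symbAct K1 g (symb0inf K1) = - symb0inf K1 := by
    rw [symb0inf, symbAct_mk_single, h0, hinf]; exact msymb_rev _ _
  have hphi : ManinPhi K1 k gammaInt v
      = (Submodule.Quotient.mk (symb0inf K1 ⊗ₜ[ℂ] v) : Coinv K1 k gammaInt) := rfl
  have key : ManinPhi K1 k gammaInt v = - ManinPhi K1 k gammaInt v := by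
    rw [hphi]
    conv_lhs => rw [coinv_mk_eq k g hg (symb0inf K1 ⊗ₜ[ℂ] v)]
    rw [diagAct]; erw [TensorProduct.map_tmul]; rw [hs, hv, TensorProduct.neg_tmul]
    exact Submodule.Quotient.mk_neg ..
  have h2 : (2:ℂ) • ManinPhi K1 k gammaInt v = 0 := by
    rw [two_smul]
    nth_rewrite 1 [key]
    rw [neg_add_cancel]
  calc ManinPhi K1 k gammaInt v
      = (2:ℂ)⁻¹ • ((2:ℂ) • ManinPhi K1 k gammaInt v) := by
        rw [smul_smul]; norm_num
    _ = 0 := by rw [h2, smul_zero]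

/-- If `g⁻¹` cyclically permutes `0 → γpt → ∞ → 0`, then `Φ` vanishes on `V^g`. -/
lemma phi_zero_of_cycle (k : ℕ) (g : Matrix.SpecialLinearGroup (Fin 2) K1) (hg : gammaInt g)
    (γpt : ProjLine K1)
    (h0 : projAct K1 g⁻¹ (pt0 K1) = γpt) (hinf : projAct K1 g⁻¹ (ptInf K1) = pt0 K1)
    (hγ : projAct K1 g⁻¹ γpt = ptInf K1)
    (v : Vkk k) (hv : vAct K1 k g v = v) : ManinPhi K1 k gammaInt v = 0 := by
  set s0 : ModSymb K1 := Submodule.Quotient.mk (Finsupp.single (pt0 K1, ptInf K1) (1:ℂ)) with hs0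
  set s1 : ModSymb K1 := Submodule.Quotient.mk (Finsupp.single (γpt, pt0 K1) (1:ℂ)) with hs1
  set s2 : ModSymb K1 := Submodule.Quotient.mk (Finsupp.single (ptInf K1, γpt) (1:ℂ)) with hs2
  have hg0 : symbAct K1 g s0 = s1 := by rw [hs0, hs1, symbAct_mk_single, h0, hinf]
  have hg1 : symbAct K1 g s1 = s2 := by rw [hs1, hs2, symbAct_mk_single, hγ, h0]
  have hrel : s0 + s2 + s1 = 0 := msymb_rel3 (pt0 K1) (ptInf K1) γpt
  have e1 : (Submodule.Quotient.mk (s0 ⊗ₜ[ℂ] v) : Coinv K1 k gammaInt)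
      = Submodule.Quotient.mk (s1 ⊗ₜ[ℂ] v) := by
    rw [coinv_mk_eq k g hg (s0 ⊗ₜ[ℂ] v), diagAct]; erw [TensorProduct.map_tmul]; rw [hg0, hv]; rfl
  have e2 : (Submodule.Quotient.mk (s1 ⊗ₜ[ℂ] v) : Coinv K1 k gammaInt)
      = Submodule.Quotient.mk (s2 ⊗ₜ[ℂ] v) := by
    rw [coinv_mk_eq k g hg (s1 ⊗ₜ[ℂ] v), diagAct]; erw [TensorProduct.map_tmul]; rw [hg1, hv]; rfl
  have hsum : (Submodule.Quotient.mk (s0 ⊗ₜ[ℂ] v) : Coinv K1 k gammaInt)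
      + Submodule.Quotient.mk (s1 ⊗ₜ[ℂ] v)
      + Submodule.Quotient.mk (s2 ⊗ₜ[ℂ] v) = 0 := by
    have : s0 + s1 + s2 = 0 := by rw [← hrel]; abel
    have h : ((s0 + s1 + s2) ⊗ₜ[ℂ] v : MV K1 k) = 0 := by rw [this, TensorProduct.zero_tmul]
    calc _ = (Submodule.Quotient.mk ((s0 + s1 + s2) ⊗ₜ[ℂ] v : MV K1 k) : Coinv K1 k gammaInt) := by
          rw [TensorProduct.add_tmul, TensorProduct.add_tmul]; rfl
      _ = 0 := by rw [h]; exact Submodule.Quotient.mk_zero _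
  rw [← e2] at hsum; erw [← e1] at hsum
  have h3 : (3:ℂ) • (Submodule.Quotient.mk (s0 ⊗ₜ[ℂ] v) : Coinv K1 k gammaInt) = 0 := by
    have : ((1:ℂ)+1+1) • (Submodule.Quotient.mk (s0 ⊗ₜ[ℂ] v) : Coinv K1 k gammaInt) = 0 := by
      rw [add_smul, add_smul, one_smul]
      exact hsum
    convert this using 2
    norm_num
  have hphi : ManinPhi K1 k gammaInt v = Submodule.Quotient.mk (s0 ⊗ₜ[ℂ] v) := rfl
  rw [hphi]
  calc (Submodule.Quotient.mk (s0 ⊗ₜ[ℂ] v) : Coinv K1 k gammaInt)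
      = (3:ℂ)⁻¹ • ((3:ℂ) • (Submodule.Quotient.mk (s0 ⊗ₜ[ℂ] v) : Coinv K1 k gammaInt)) := by
        rw [smul_smul]; norm_num
    _ = 0 := by rw [h3, smul_zero]


def pt1 : ProjLine K1 :=
  Projectivization.mk K1 ![1, 1] (by intro h; simpa using congrFun h 1)

def ptI : ProjLine K1 :=
  Projectivization.mk K1 ![iK, 1] (by intro h; simpa using congrFun h 1)

lemma coe_S : ((S : Matrix.SpecialLinearGroup (Fin 2) K1) : Matrix (Fin 2) (Fin 2) K1)
    = !![0, -1; 1, 0] := rfl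

lemma coe_SL : ((S * L : Matrix.SpecialLinearGroup (Fin 2) K1) : Matrix (Fin 2) (Fin 2) K1)
    = !![0, iK; iK, 0] := by
  rw [Matrix.SpecialLinearGroup.coe_mul]
  show (!![0, -1; 1, 0] : Matrix (Fin 2) (Fin 2) K1) * !![iK, 0; 0, -iK] = _
  rw [Matrix.mul_fin_two]
  norm_num

lemma coe_U : ((U : Matrix.SpecialLinearGroup (Fin 2) K1) : Matrix (Fin 2) (Fin 2) K1)
    = !![1, -1; 1, 0] := by
  rw [U, Matrix.SpecialLinearGroup.coe_mul]
  show (!![1, 1; 0, 1] : Matrix (Fin 2) (Fin 2) K1) * !![0, -1; 1, 0] = _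
  rw [Matrix.mul_fin_two]
  norm_num

lemma coe_E : ((E : Matrix.SpecialLinearGroup (Fin 2) K1) : Matrix (Fin 2) (Fin 2) K1)
    = !![-1, iK; iK, 0] := by
  rw [E, Matrix.SpecialLinearGroup.coe_mul, Matrix.SpecialLinearGroup.coe_mul]
  show (!![1, iK; 0, 1] : Matrix (Fin 2) (Fin 2) K1) * !![0, -1; 1, 0] * !![iK, 0; 0, -iK] = _
  rw [Matrix.mul_fin_two, Matrix.mul_fin_two]
  norm_num [iK_mul_iK]

lemma coe_S_inv : ((S⁻¹ : Matrix.SpecialLinearGroup (Fin 2) K1) : Matrix (Fin 2) (Fin 2) K1)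
    = !![0, 1; -1, 0] := by
  rw [Matrix.SpecialLinearGroup.coe_inv, coe_S, Matrix.adjugate_fin_two_of]
  norm_num

lemma coe_SL_inv :
    (((S * L)⁻¹ : Matrix.SpecialLinearGroup (Fin 2) K1) : Matrix (Fin 2) (Fin 2) K1)
    = !![0, -iK; -iK, 0] := by
  rw [Matrix.SpecialLinearGroup.coe_inv, coe_SL, Matrix.adjugate_fin_two_of]

lemma coe_U_inv : ((U⁻¹ : Matrix.SpecialLinearGroup (Fin 2) K1) : Matrix (Fin 2) (Fin 2) K1)
    = !![0, 1; -1, 1] := by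
  rw [Matrix.SpecialLinearGroup.coe_inv, coe_U, Matrix.adjugate_fin_two_of]
  norm_num

lemma coe_E_inv : ((E⁻¹ : Matrix.SpecialLinearGroup (Fin 2) K1) : Matrix (Fin 2) (Fin 2) K1)
    = !![0, -iK; -iK, -1] := by
  rw [Matrix.SpecialLinearGroup.coe_inv, coe_E, Matrix.adjugate_fin_two_of]

-- projAct computations
lemma pS0 : projAct K1 S⁻¹ (pt0 K1) = ptInf K1 := by
  refine projAct_mk_eq _ _ _ _ _ 1 ?_
  rw [coe_S_inv]
  funext i; fin_cases i <;>
    simp [Matrix.mulVec, dotProduct, Fin.sum_univ_two]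

lemma pSinf : projAct K1 S⁻¹ (ptInf K1) = pt0 K1 := by
  refine projAct_mk_eq _ _ _ _ _ (-1) ?_
  rw [coe_S_inv]
  funext i; fin_cases i <;>
    simp [Matrix.mulVec, dotProduct, Fin.sum_univ_two]

lemma pSL0 : projAct K1 (S * L)⁻¹ (pt0 K1) = ptInf K1 := by
  refine projAct_mk_eq _ _ _ _ _ (-iK) ?_
  rw [coe_SL_inv]
  funext i; fin_cases i <;>
    simp [Matrix.mulVec, dotProduct, Fin.sum_univ_two]

lemma pSLinf : projAct K1 (S * L)⁻¹ (ptInf K1) = pt0 K1 := by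
  refine projAct_mk_eq _ _ _ _ _ (-iK) ?_
  rw [coe_SL_inv]
  funext i; fin_cases i <;>
    simp [Matrix.mulVec, dotProduct, Fin.sum_univ_two]

lemma pU0 : projAct K1 U⁻¹ (pt0 K1) = pt1 := by
  refine projAct_mk_eq _ _ _ _ _ 1 ?_
  rw [coe_U_inv]
  funext i; fin_cases i <;>
    simp [Matrix.mulVec, dotProduct, Fin.sum_univ_two]

lemma pUinf : projAct K1 U⁻¹ (ptInf K1) = pt0 K1 := by
  refine projAct_mk_eq _ _ _ _ _ (-1) ?_
  rw [coe_U_inv]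
  funext i; fin_cases i <;>
    simp [Matrix.mulVec, dotProduct, Fin.sum_univ_two]

lemma pU1 : projAct K1 U⁻¹ pt1 = ptInf K1 := by
  refine projAct_mk_eq _ _ _ _ _ 1 ?_
  rw [coe_U_inv]
  funext i; fin_cases i <;>
    simp [Matrix.mulVec, dotProduct, Fin.sum_univ_two]

lemma pE0 : projAct K1 E⁻¹ (pt0 K1) = ptI := by
  refine projAct_mk_eq _ _ _ _ _ (-1) ?_
  rw [coe_E_inv]
  funext i; fin_cases i <;>
    simp [Matrix.mulVec, dotProduct, Fin.sum_univ_two]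

lemma pEinf : projAct K1 E⁻¹ (ptInf K1) = pt0 K1 := by
  refine projAct_mk_eq _ _ _ _ _ (-iK) ?_
  rw [coe_E_inv]
  funext i; fin_cases i <;>
    simp [Matrix.mulVec, dotProduct, Fin.sum_univ_two]

lemma pEI : projAct K1 E⁻¹ ptI = ptInf K1 := by
  refine projAct_mk_eq _ _ _ _ _ (-iK) ?_
  rw [coe_E_inv]
  funext i; fin_cases i <;>
    simp [Matrix.mulVec, dotProduct, Fin.sum_univ_two] <;>
    linear_combination (-(1:K1)) * iK_mul_iK

-- gammaInt facts
lemma mem_ZI_I : Complex.I ∈ Subring.closure {Complex.I} :=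
  Subring.subset_closure rfl

lemma gammaInt_of_coe (g : Matrix.SpecialLinearGroup (Fin 2) K1)
    (A : Matrix (Fin 2) (Fin 2) K1)
    (h : ((g : Matrix.SpecialLinearGroup (Fin 2) K1) : Matrix (Fin 2) (Fin 2) K1) = A)
    (hA : ∀ i j, ((A i j : K1) : ℂ) ∈ Subring.closure {Complex.I}) : gammaInt g := by
  intro i j; rw [h]; exact hA i j

lemma gammaInt_S : gammaInt S := by
  refine gammaInt_of_coe _ _ coe_S ?_
  intro i j; fin_cases i <;> fin_cases j <;>
    simp <;>
    first
      | exact Subring.zero_mem _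
      | exact Subring.one_mem _
      | exact Subring.neg_mem _ (Subring.one_mem _)
      | exact mem_ZI_I
      | exact Subring.neg_mem _ mem_ZI_I

lemma gammaInt_SL : gammaInt (S * L) := by
  refine gammaInt_of_coe _ _ coe_SL ?_
  intro i j; fin_cases i <;> fin_cases j <;>
    simp [iK_coe] <;>
    first
      | exact Subring.zero_mem _
      | exact Subring.one_mem _
      | exact Subring.neg_mem _ (Subring.one_mem _)
      | exact mem_ZI_I
      | exact Subring.neg_mem _ mem_ZI_I

lemma gammaInt_U : gammaInt U := by
  refine gammaInt_of_coe _ _ coe_U ?_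
  intro i j; fin_cases i <;> fin_cases j <;>
    simp <;>
    first
      | exact Subring.zero_mem _
      | exact Subring.one_mem _
      | exact Subring.neg_mem _ (Subring.one_mem _)
      | exact mem_ZI_I
      | exact Subring.neg_mem _ mem_ZI_I

lemma gammaInt_E : gammaInt E := by
  refine gammaInt_of_coe _ _ coe_E ?_
  intro i j; fin_cases i <;> fin_cases j <;>
    simp [iK_coe] <;>
    first
      | exact Subring.zero_mem _
      | exact Subring.one_mem _
      | exact Subring.neg_mem _ (Subring.one_mem _)
      | exact mem_ZI_I
      | exact Subring.neg_mem _ mem_ZI_I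

lemma phi_add (k : ℕ) (a b : Vkk k) :
    ManinPhi K1 k gammaInt (a + b) = ManinPhi K1 k gammaInt a + ManinPhi K1 k gammaInt b := by
  unfold ManinPhi
  rw [TensorProduct.tmul_add]
  exact Submodule.Quotient.mk_add _

/-- for `K = ℚ(i)`, `Γ = SL₂(ℤ[i])`, and every `k ≥ 0`, the subspace
`V^S + V^{SL} + V^U + V^E` of `V_{k,k}(ℂ)` is contained in the kernel of the Manin map `Φ`. -/
theorem sum_fixed_in_ker_Manin (k : ℕ) :
    ∀ v ∈ fixV k S ⊔ fixV k (S * L) ⊔ fixV k U ⊔ fixV k E,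
      ManinPhi K1 k gammaInt v = 0 := by
  intro v hv
  obtain ⟨w, hw, d, hd, rfl⟩ := Submodule.mem_sup.mp hv
  obtain ⟨w2, hw2, c, hc, rfl⟩ := Submodule.mem_sup.mp hw
  obtain ⟨a, ha, b, hb, rfl⟩ := Submodule.mem_sup.mp hw2
  rw [phi_add, phi_add, phi_add]
  rw [phi_zero_of_swap k S gammaInt_S pS0 pSinf a (mem_fixV ha),
    phi_zero_of_swap k (S * L) gammaInt_SL pSL0 pSLinf b (mem_fixV hb),
    phi_zero_of_cycle k U gammaInt_U pt1 pU0 pUinf pU1 c (mem_fixV hc),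
    phi_zero_of_cycle k E gammaInt_E ptI pE0 pEinf pEI d (mem_fixV hd)]
  simp

end Stmt18
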